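/- Let (y_t)_{t∈ℤ} be real random variables with finite fourth moments such that E y_t = 0 for all t, E y_t² = σ² for a constant σ² (independent of t), E(y_s y_t) = 0 for all s ≠ t, and such that all fourth cross-moments factor as for a Gaussian process: for all integers a, b, c, d that are not all equal, E(y_a y_b y_c y_d) = E(y_a y_b)E(y_c y_d) + E(y_a y_c)E(y_b y_d) + E(y_a y_d)E(y_b y_c). For m ≥ 1, 0 ≤ n ≤ 2^m − 1 and t ∈ ℤ define z_{m,n,t} = ∑_{i∈ℤ} ∑_{j>i} v_{m,n,i} v_{m,n,j} y_{t−i} y_{t−j}. Then for all scales m ≥ 1, all 0 ≤ n₁, n₂ ≤ 2^m − 1, every t ∈ ℤ and every integer s, the covariance has the explicit filter expression Cov( z_{m,n₁,t}, z_{m,n₂,t−s} ) = σ⁴ · ∑_{i∈ℤ} ∑_{j>i} v_{m,n₁,i} v_{m,n₁,j} v_{m,n₂,i−s} v_{m,n₂,j−s}. -/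

import Mathlib

open MeasureTheory ProbabilityTheory Filter
open scoped ENNReal

/-- Filter selector `u_n`: equals `g` if `n mod 4 ∈ {0,3}` and `h` if `n mod 4 ∈ {1,2}`. -/
noncomputable def uF (g h : ℤ → ℝ) (n : ℕ) : ℤ → ℝ :=
  fun l => if n % 4 = 0 ∨ n % 4 = 3 then g l else h l

/-- MODWPT wavelet packet filters `v_{m,n}`, defined recursively by `v_{1,0} = g`,
`v_{1,1} = h`, and `v_{m,n,l} = ∑_k u_{n,k} v_{m-1, ⌊n/2⌋, l - 2^(m-1) k}`. -/
noncomputable def wp (g h : ℤ → ℝ) : ℕ → ℕ → ℤ → ℝ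
  | 0, _, _ => 0
  | 1, n, l => if n = 0 then g l else h l
  | (m + 2), n, l => ∑ᶠ k : ℤ, uF g h n k * wp g h (m + 1) (n / 2) (l - 2 ^ (m + 1) * k)

lemma wp_support_finite (g h : ℤ → ℝ) (hg : (Function.support g).Finite)
    (hh : (Function.support h).Finite) :
    ∀ m n : ℕ, (Function.support (wp g h m n)).Finite := by
  intro m
  induction m with
  | zero => intro n; simp [wp, Function.support]
  | succ m ih =>
    intro n
    match m with
    | 0 =>
      apply (hg.union hh).subset
      intro l hl
      simp only [Function.mem_support, wp] at hl
      by_cases hn : n = 0 <;> simp [hn] at hl <;> simp [Function.mem_support, hl]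
    | m' + 1 =>
      have hu : (Function.support (uF g h n)).Finite := by
        apply (hg.union hh).subset
        intro k hk
        simp only [Function.mem_support, uF] at hk
        split at hk <;> simp [Function.mem_support, hk]
      have hprev := ih (n / 2)
      apply Set.Finite.subset ((hu.prod hprev).image (fun p : ℤ × ℤ => 2 ^ (m' + 1) * p.1 + p.2))
      intro l hl
      simp only [Function.mem_support, wp] at hl
      have : ∃ k : ℤ, uF g h n k * wp g h (m' + 1) (n / 2) (l - 2 ^ (m' + 1) * k) ≠ 0 := by
        by_contra hc
        push_neg at hc
        exact hl (by simp [hc])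
      obtain ⟨k, hk⟩ := this
      have h1 : uF g h n k ≠ 0 := fun h0 => hk (by simp [h0])
      have h2 : wp g h (m' + 1) (n / 2) (l - 2 ^ (m' + 1) * k) ≠ 0 := fun h0 => hk (by simp [h0])
      exact ⟨(k, l - 2 ^ (m' + 1) * k), ⟨h1, h2⟩, by simp⟩

lemma half_eq' : (1:ℝ≥0∞)/2 = 1/4 + 1/4 := by
  rw [ENNReal.div_add_div_same]
  rw [ENNReal.eq_div_iff (by norm_num) (by norm_num)]
  rw [show (4:ℝ≥0∞) = 2*2 by norm_num, one_div, mul_assoc,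
    ENNReal.mul_inv_cancel (by norm_num) (by norm_num)]
  norm_num

lemma one_eq' : (1:ℝ≥0∞) = 1/2 + 1/2 := by
  rw [ENNReal.div_add_div_same]
  rw [ENNReal.eq_div_iff (by norm_num) (by norm_num)]
  norm_num

section Int
variable {Ω : Type} [MeasureSpace Ω] [IsProbabilityMeasure (ℙ : Measure Ω)]

lemma mul2_memL2 {f g : Ω → ℝ} (hf : MemLp f 4) (hg : MemLp g 4) :
    MemLp (fun ω => f ω * g ω) 2 := by
  have := hg.smul (φ := f) hf (r := 2) (hpqr := ⟨by simpa only [one_div] using half_eq'.symm⟩)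
  simp only [smul_eq_mul] at this
  exact this

lemma mul2_integrable {f g : Ω → ℝ} (hf : MemLp f 4) (hg : MemLp g 4) :
    Integrable (fun ω => f ω * g ω) := by
  have h2f : MemLp f 2 := hf.mono_exponent (by norm_num)
  have h2g : MemLp g 2 := hg.mono_exponent (by norm_num)
  have := h2g.smul (φ := f) h2f (r := 1) (hpqr := ⟨by rw [inv_one]; simpa only [one_div] using one_eq'.symm⟩)
  rw [← memLp_one_iff_integrable]
  simp only [smul_eq_mul] at this
  exact this

lemma mul4_integrable {f g u v : Ω → ℝ} (hf : MemLp f 4) (hg : MemLp g 4)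
    (hu : MemLp u 4) (hv : MemLp v 4) :
    Integrable (fun ω => f ω * g ω * u ω * v ω) := by
  have h1 := mul2_memL2 hf hg
  have h2 := mul2_memL2 hu hv
  have := h2.smul (φ := fun ω => f ω * g ω) h1 (r := 1) (hpqr := ⟨by rw [inv_one]; simpa only [one_div] using one_eq'.symm⟩)
  rw [← memLp_one_iff_integrable]
  have e : (fun ω => f ω * g ω * u ω * v ω)
      = (fun ω => f ω * g ω) • (fun ω => u ω * v ω) := by
    funext ω; simp only [Pi.smul_apply', Pi.smul_apply, smul_eq_mul]; ring
  rw [e]; exact this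

end Int

lemma finsum2_if (c : ℤ → ℝ) (S : Finset ℤ) (hc : ∀ i, c i ≠ 0 → i ∈ S) (r q : ℤ → ℝ) :
    (∑ᶠ i : ℤ, ∑ᶠ j : ℤ, if i < j then c i * c j * r i * q j else 0)
    = ∑ i ∈ S, ∑ j ∈ S, if i < j then c i * c j * r i * q j else 0 := by
  have hin : ∀ i : ℤ, (∑ᶠ j : ℤ, if i < j then c i * c j * r i * q j else 0)
      = ∑ j ∈ S, if i < j then c i * c j * r i * q j else 0 := by
    intro i
    apply finsum_eq_finset_sum_of_support_subset
    intro j hj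
    simp only [Function.mem_support] at hj
    simp only [Finset.coe_sort_coe, Finset.mem_coe]
    apply hc
    intro h0; apply hj; split <;> simp [h0]
  rw [finsum_congr hin]
  apply finsum_eq_finset_sum_of_support_subset
  intro i hi
  simp only [Function.mem_support] at hi
  simp only [Finset.coe_sort_coe, Finset.mem_coe]
  apply hc
  intro h0; apply hi
  apply Finset.sum_eq_zero; intro j _; split <;> simp [h0]

/-- For mean-zero white noise with constant variance `σ²` whose fourth
cross-moments factor as for a Gaussian process, the covariance of the quadratic
statistics `z_{m,n,t} = ∑_i ∑_{j>i} v_{m,n,i} v_{m,n,j} y_{t-i} y_{t-j}` has the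
explicit filter expression
`Cov(z_{m,n₁,t}, z_{m,n₂,t-s}) = σ⁴ ∑_i ∑_{j>i} v_{m,n₁,i} v_{m,n₁,j} v_{m,n₂,i-s} v_{m,n₂,j-s}`. -/
theorem stmt12 (Ω : Type) [MeasureSpace Ω] [IsProbabilityMeasure (ℙ : Measure Ω)]
    (y : ℤ → Ω → ℝ)
    (hL4 : ∀ t : ℤ, MemLp (y t) 4)
    (hmean : ∀ t : ℤ, ∫ ω, y t ω = 0)
    (σ2 : ℝ) (hvar : ∀ t : ℤ, ∫ ω, (y t ω) ^ 2 = σ2)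
    (huncorr : ∀ s t : ℤ, s ≠ t → ∫ ω, y s ω * y t ω = 0)
    (hgauss4 : ∀ a b c d : ℤ, ¬(a = b ∧ a = c ∧ a = d) →
      ∫ ω, y a ω * y b ω * y c ω * y d ω
        = (∫ ω, y a ω * y b ω) * (∫ ω, y c ω * y d ω)
          + (∫ ω, y a ω * y c ω) * (∫ ω, y b ω * y d ω)
          + (∫ ω, y a ω * y d ω) * (∫ ω, y b ω * y c ω))
    (h g : ℤ → ℝ)
    (hhfin : (Function.support h).Finite) (hgfin : (Function.support g).Finite)
    (m : ℕ) (hm : 1 ≤ m) (n₁ n₂ : ℕ)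
    (hn₁ : n₁ ≤ 2 ^ m - 1) (hn₂ : n₂ ≤ 2 ^ m - 1) (t s : ℤ) :
    (∫ ω, (∑ᶠ i : ℤ, ∑ᶠ j : ℤ,
          if i < j then wp g h m n₁ i * wp g h m n₁ j * y (t - i) ω * y (t - j) ω else 0)
        * (∑ᶠ i : ℤ, ∑ᶠ j : ℤ,
          if i < j then
            wp g h m n₂ i * wp g h m n₂ j * y (t - s - i) ω * y (t - s - j) ω
          else 0))
      - (∫ ω, ∑ᶠ i : ℤ, ∑ᶠ j : ℤ,
          if i < j then wp g h m n₁ i * wp g h m n₁ j * y (t - i) ω * y (t - j) ω else 0)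
        * (∫ ω, ∑ᶠ i : ℤ, ∑ᶠ j : ℤ,
          if i < j then
            wp g h m n₂ i * wp g h m n₂ j * y (t - s - i) ω * y (t - s - j) ω
          else 0)
      = σ2 ^ 2 * ∑ᶠ i : ℤ, ∑ᶠ j : ℤ,
          if i < j then
            wp g h m n₁ i * wp g h m n₁ j * wp g h m n₂ (i - s) * wp g h m n₂ (j - s)
          else 0 := by
  set a := wp g h m n₁ with ha
  set b := wp g h m n₂ with hb
  have hA : (Function.support a).Finite := wp_support_finite g h hgfin hhfin m n₁
  have hB : (Function.support b).Finite := wp_support_finite g h hgfin hhfin m n₂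
  set SA := hA.toFinset with hSA
  set SB := hB.toFinset with hSB
  have hmemA : ∀ i, a i ≠ 0 → i ∈ SA := by
    intro i hi; rw [hSA, Set.Finite.mem_toFinset]; exact hi
  have hmemB : ∀ i, b i ≠ 0 → i ∈ SB := by
    intro i hi; rw [hSB, Set.Finite.mem_toFinset]; exact hi
  have hb0 : ∀ x, x ∉ SB → b x = 0 := by
    intro x hx; by_contra hc; exact hx (hmemB x hc)
  -- second moments
  have he2 : ∀ u v : ℤ, (∫ ω, y u ω * y v ω) = if u = v then σ2 else 0 := by
    intro u v
    by_cases huv : u = v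
    · subst huv
      rw [if_pos rfl, ← hvar u]
      congr 1; funext ω; ring
    · rw [if_neg huv]; exact huncorr u v huv
  -- integrability of the generic quadratic term
  have keyInt2 : ∀ (c : ℤ → ℝ) (t' i j : ℤ),
      Integrable (fun ω => if i < j then c i * c j * y (t' - i) ω * y (t' - j) ω else 0) := by
    intro c t' i j
    by_cases hij : i < j
    · simp only [if_pos hij]
      have e : (fun ω => c i * c j * y (t' - i) ω * y (t' - j) ω)
          = fun ω => (c i * c j) * (y (t' - i) ω * y (t' - j) ω) := by funext ω; ring
      rw [e]
      exact (mul2_integrable (hL4 _) (hL4 _)).const_mul _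
    · simp only [if_neg hij]; exact integrable_const 0
  -- mean of each z is zero
  have key0 : ∀ (c : ℤ → ℝ) (t' i j : ℤ),
      (∫ ω, if i < j then c i * c j * y (t' - i) ω * y (t' - j) ω else 0) = 0 := by
    intro c t' i j
    by_cases hij : i < j
    · simp only [if_pos hij]
      have e : (fun ω => c i * c j * y (t' - i) ω * y (t' - j) ω)
          = fun ω => (c i * c j) * (y (t' - i) ω * y (t' - j) ω) := by funext ω; ring
      rw [e, integral_const_mul, huncorr _ _ (by omega : t' - i ≠ t' - j), mul_zero]
    · simp only [if_neg hij, integral_const]; simp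
  have hEz : ∀ (c : ℤ → ℝ) (t' : ℤ) (S : Finset ℤ),
      (∫ ω, ∑ i ∈ S, ∑ j ∈ S, if i < j then c i * c j * y (t' - i) ω * y (t' - j) ω else 0)
        = 0 := by
    intro c t' S
    rw [integral_finset_sum _ fun i _ => integrable_finset_sum _ fun j _ => keyInt2 c t' i j]
    apply Finset.sum_eq_zero; intro i _
    rw [integral_finset_sum _ fun j _ => keyInt2 c t' i j]
    exact Finset.sum_eq_zero fun j _ => key0 c t' i j
  -- integrability of the quartic terms
  have keyInt4 : ∀ i j k l : ℤ,
      Integrable (fun ω =>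
        (if i < j then a i * a j * y (t - i) ω * y (t - j) ω else 0)
        * (if k < l then b k * b l * y (t - s - k) ω * y (t - s - l) ω else 0)) := by
    intro i j k l
    by_cases h1 : i < j
    · by_cases h2 : k < l
      · simp only [if_pos h1, if_pos h2]
        have e : (fun ω => (a i * a j * y (t - i) ω * y (t - j) ω)
              * (b k * b l * y (t - s - k) ω * y (t - s - l) ω))
            = fun ω => (a i * a j * (b k * b l))
              * (y (t - i) ω * y (t - j) ω * y (t - s - k) ω * y (t - s - l) ω) := by
          funext ω; ring
        rw [e]
        exact (mul4_integrable (hL4 _) (hL4 _) (hL4 _) (hL4 _)).const_mul _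
      · simp only [if_neg h2, mul_zero]; exact integrable_const 0
    · simp only [if_neg h1, zero_mul]; exact integrable_const 0
  -- value of the quartic integrals
  have key4 : ∀ i j k l : ℤ,
      (∫ ω, (if i < j then a i * a j * y (t - i) ω * y (t - j) ω else 0)
        * (if k < l then b k * b l * y (t - s - k) ω * y (t - s - l) ω else 0))
      = if i < j ∧ k = i - s ∧ l = j - s then σ2 ^ 2 * (a i * a j * (b k * b l)) else 0 := by
    intro i j k l
    by_cases h1 : i < j
    · by_cases h2 : k < l
      · simp only [if_pos h1, if_pos h2]
        have e : (fun ω => (a i * a j * y (t - i) ω * y (t - j) ω)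
              * (b k * b l * y (t - s - k) ω * y (t - s - l) ω))
            = fun ω => (a i * a j * (b k * b l))
              * (y (t - i) ω * y (t - j) ω * y (t - s - k) ω * y (t - s - l) ω) := by
          funext ω; ring
        rw [e, integral_const_mul,
          hgauss4 (t - i) (t - j) (t - s - k) (t - s - l) (by intro ⟨hab, _, _⟩; omega)]
        rw [he2, he2, he2, he2, he2, he2]
        rw [if_neg (by omega : ¬ (t - i = t - j)),
          if_neg (by omega : ¬ (t - s - k = t - s - l))]
        simp only [show (t - i = t - s - k) ↔ k = i - s from by omega,
          show (t - j = t - s - l) ↔ l = j - s from by omega,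
          show (t - i = t - s - l) ↔ l = i - s from by omega,
          show (t - j = t - s - k) ↔ k = j - s from by omega]
        split_ifs <;> first | (exfalso; omega) | ring
      · simp only [if_neg h2, mul_zero, integral_const, smul_zero]
        rw [if_neg]
        rintro ⟨hij, hk, hl⟩; omega
    · simp only [if_neg h1, zero_mul, integral_const, smul_zero]
      rw [if_neg]
      rintro ⟨hij, _, _⟩; omega
  -- collapse the inner double sum
  have pullite : ∀ (p : Prop) [Decidable p] (f : ℤ → ℝ),
      (∑ l ∈ SB, if p then f l else 0) = if p then ∑ l ∈ SB, f l else 0 := by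
    intro p _ f; split_ifs <;> simp
  have hinner : ∀ i j : ℤ,
      (∑ k ∈ SB, ∑ l ∈ SB,
        if i < j ∧ k = i - s ∧ l = j - s then σ2 ^ 2 * (a i * a j * (b k * b l)) else 0)
      = if i < j then σ2 ^ 2 * (a i * a j * (b (i - s) * b (j - s))) else 0 := by
    intro i j
    by_cases h1 : i < j
    · simp only [h1, true_and, if_true, ite_and]
      simp only [pullite, Finset.sum_ite_eq']
      split_ifs with hk hl
      · rfl
      · rw [hb0 _ hl]; ring
      · rw [hb0 _ hk]; ring
    · simp only [h1, false_and, if_false]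
      simp
  -- the main quartic integral
  have main : (∫ ω, (∑ i ∈ SA, ∑ j ∈ SA,
        if i < j then a i * a j * y (t - i) ω * y (t - j) ω else 0)
      * (∑ k ∈ SB, ∑ l ∈ SB,
        if k < l then b k * b l * y (t - s - k) ω * y (t - s - l) ω else 0))
      = ∑ i ∈ SA, ∑ j ∈ SA,
        if i < j then σ2 ^ 2 * (a i * a j * (b (i - s) * b (j - s))) else 0 := by
    have expand : ∀ ω : Ω, (∑ i ∈ SA, ∑ j ∈ SA,
          if i < j then a i * a j * y (t - i) ω * y (t - j) ω else 0)
        * (∑ k ∈ SB, ∑ l ∈ SB,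
          if k < l then b k * b l * y (t - s - k) ω * y (t - s - l) ω else 0)
        = ∑ i ∈ SA, ∑ j ∈ SA, ∑ k ∈ SB, ∑ l ∈ SB,
          (if i < j then a i * a j * y (t - i) ω * y (t - j) ω else 0)
          * (if k < l then b k * b l * y (t - s - k) ω * y (t - s - l) ω else 0) := by
      intro ω
      rw [Finset.sum_mul]
      refine Finset.sum_congr rfl fun i _ => ?_
      rw [Finset.sum_mul]
      refine Finset.sum_congr rfl fun j _ => ?_
      rw [Finset.mul_sum]
      refine Finset.sum_congr rfl fun k _ => ?_
      rw [Finset.mul_sum]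
    simp only [expand]
    rw [integral_finset_sum _ fun i _ => integrable_finset_sum _ fun j _ =>
      integrable_finset_sum _ fun k _ => integrable_finset_sum _ fun l _ => keyInt4 i j k l]
    refine Finset.sum_congr rfl fun i _ => ?_
    rw [integral_finset_sum _ fun j _ =>
      integrable_finset_sum _ fun k _ => integrable_finset_sum _ fun l _ => keyInt4 i j k l]
    refine Finset.sum_congr rfl fun j _ => ?_
    calc (∫ ω, ∑ k ∈ SB, ∑ l ∈ SB,
          (if i < j then a i * a j * y (t - i) ω * y (t - j) ω else 0)
          * (if k < l then b k * b l * y (t - s - k) ω * y (t - s - l) ω else 0))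
        = ∑ k ∈ SB, ∑ l ∈ SB,
          if i < j ∧ k = i - s ∧ l = j - s then σ2 ^ 2 * (a i * a j * (b k * b l)) else 0 := by
          rw [integral_finset_sum _ fun k _ =>
            integrable_finset_sum _ fun l _ => keyInt4 i j k l]
          refine Finset.sum_congr rfl fun k _ => ?_
          rw [integral_finset_sum _ fun l _ => keyInt4 i j k l]
          exact Finset.sum_congr rfl fun l _ => key4 i j k l
      _ = _ := hinner i j
  -- final assembly
  simp only [finsum2_if a SA hmemA, finsum2_if b SB hmemB]
  rw [main, hEz a t SA, hEz b (t - s) SB, zero_mul, sub_zero, Finset.mul_sum]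
  refine Finset.sum_congr rfl fun i _ => ?_
  rw [Finset.mul_sum]
  refine Finset.sum_congr rfl fun j _ => ?_
  rw [mul_ite, mul_zero]
  split_ifs with hc
  · ring
  · rfl
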